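/- Let r be a positive integer, ε > 0, and α ∈ ℝ/ℤ with ⟨qα⟩ < q^{−r−ε} for infinitely many odd positive integers q. Define the sequence s : ℤ → {0,1} by s_n = χ_{[0,1/2)}(αn^r + 1/4 mod 1). Then R(s) = T(s) = ∞: for every m there exist infinitely many n such that s_k = s_{k+n} and s_{n+1-k} = s_{1-k} for all 1 ≤ k ≤ mn. -/

import Mathlib

open scoped ENNReal

noncomputable def Rn {A : Type*} (ω : ℤ → A) (n : ℕ) : ℝ≥0∞ :=
  1 + (n : ℝ≥0∞)⁻¹ *
    sSup ((fun m : ℕ => (m : ℝ≥0∞)) ''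
      {m : ℕ | ∀ k : ℕ, 1 ≤ k → k ≤ m → ω (k : ℤ) = ω ((k : ℤ) + n)})

noncomputable def Tn {A : Type*} (ω : ℤ → A) (n : ℕ) : ℝ≥0∞ :=
  1 + (n : ℝ≥0∞)⁻¹ *
    sSup ((fun m : ℕ => (m : ℝ≥0∞)) ''
      {m : ℕ | ∀ k : ℕ, 1 ≤ k → k ≤ m →
        ω (k : ℤ) = ω ((k : ℤ) + n) ∧ ω ((n : ℤ) + 1 - k) = ω (1 - (k : ℤ))})

noncomputable def RRep {A : Type*} (ω : ℤ → A) : ℝ≥0∞ := Filter.atTop.limsup (Rn ω)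

noncomputable def TRep {A : Type*} (ω : ℤ → A) : ℝ≥0∞ := Filter.atTop.limsup (Tn ω)

/-- `⟨t⟩`, the distance from `t` to the nearest integer. -/
noncomputable def distInt (t : ℝ) : ℝ := |t - round t|

open Filter

set_option maxHeartbeats 800000 in
lemma indicator_mod (r q : ℕ) (hq : Odd q) (hq0 : 0 < q) (α : ℝ) (N : ℕ)
    (hδ : |(q:ℝ)*α - round ((q:ℝ)*α)| * (N:ℝ)^r < 1/4)
    (c : ℤ) (hc : |c| ≤ (N:ℤ)) :
    (Int.fract (α * (c:ℝ)^r + 1/4) < 1/2 ↔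
      (4*(round ((q:ℝ)*α) * c^r) + (q:ℤ)) % ((4*q:ℕ):ℤ) < 2*(q:ℤ)) := by
  set p : ℤ := round ((q:ℝ)*α) with hp
  set δ : ℝ := (q:ℝ)*α - p with hδdef
  have hQ : (0:ℝ) < (q:ℝ) := by exact_mod_cast hq0
  set M : ℤ := 4*(p*c^r) + (q:ℤ) with hM
  set e : ℤ := M % ((4*q : ℕ) : ℤ) with he
  have hoddM : Odd M := by
    rw [hM]
    refine Even.add_odd ⟨2*(p*c^r), by ring⟩ ?_
    exact_mod_cast hq
  have hodde : Odd e := by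
    have h1 := Int.emod_add_mul_ediv M ((4*q:ℕ):ℤ)
    have h2 : e = M - ((4*q:ℕ):ℤ) * (M / ((4*q:ℕ):ℤ)) := by omega
    rw [h2]
    refine hoddM.sub_even ⟨((2*q:ℕ):ℤ) * (M / ((4*q:ℕ):ℤ)), ?_⟩
    push_cast; ring
  have he0 : 0 ≤ e := Int.emod_nonneg M (by positivity)
  have he1 : 1 ≤ e := by rcases hodde with ⟨j, hj⟩; omega
  have he4 : e < ((4*q:ℕ):ℤ) := Int.emod_lt_of_pos M (by positivity)
  have hene : e ≠ 2*(q:ℤ) := by rcases hodde with ⟨j, hj⟩; omega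
  set d : ℝ := δ * (c:ℝ)^r / q with hd
  have hcr : |(c:ℝ)^r| ≤ (N:ℝ)^r := by
    rw [abs_pow]
    refine pow_le_pow_left₀ (abs_nonneg _) ?_ r
    exact_mod_cast hc
  have hdlt : |d| < 1/(4*(q:ℝ)) := by
    rw [hd, abs_div, abs_mul, abs_of_pos hQ, div_lt_div_iff₀ hQ (by positivity)]
    have h1 : |δ| * |(c:ℝ)^r| ≤ |δ| * (N:ℝ)^r :=
      mul_le_mul_of_nonneg_left hcr (abs_nonneg _)
    nlinarith [hδ]
  have habs := abs_lt.mp hdlt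
  set D : ℝ := d * (4*(q:ℝ)) with hD
  have hd1 : D < 1 := by
    rw [hD]; calc d * (4*(q:ℝ)) < (1/(4*(q:ℝ))) * (4*(q:ℝ)) := by
                    exact mul_lt_mul_of_pos_right habs.2 (by positivity)
      _ = 1 := by field_simp
  have hd2 : -1 < D := by
    rw [hD]
    have : (-(1/(4*(q:ℝ)))) * (4*(q:ℝ)) < d * (4*(q:ℝ)) :=
      mul_lt_mul_of_pos_right habs.1 (by positivity)
    calc (-1:ℝ) = (-(1/(4*(q:ℝ)))) * (4*(q:ℝ)) := by field_simp
      _ < d * (4*(q:ℝ)) := this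
  have hx : α * (c:ℝ)^r + 1/4 = (M:ℝ)/((4*q:ℕ):ℝ) + d := by
    have hα : α = ((p:ℝ) + δ)/q := by rw [hδdef]; field_simp; ring
    rw [hα, hM, hd]
    push_cast
    field_simp
    ring
  have hfr : Int.fract ((M:ℝ)/((4*q:ℕ):ℝ)) = (e:ℝ)/((4*q:ℕ):ℝ) :=
    Int.fract_div_intCast_eq_div_intCast_mod
  have hcast : ((4*q:ℕ):ℝ) = 4*(q:ℝ) := by push_cast; ring
  rw [hcast] at hx hfr
  have heR1 : (1:ℝ) ≤ (e:ℝ) := by exact_mod_cast he1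
  have heR4 : (e:ℝ) ≤ 4*(q:ℝ) - 1 := by
    have h3 : e ≤ 4*(q:ℤ) - 1 := by push_cast at he4; omega
    have : (e:ℝ) ≤ ((4*(q:ℤ) - 1 : ℤ):ℝ) := by exact_mod_cast h3
    push_cast at this; linarith
  have hEq : Int.fract (α * (c:ℝ)^r + 1/4) = ((e:ℝ) + D)/(4*(q:ℝ)) := by
    rw [hx]
    have hsplit : (M:ℝ)/(4*(q:ℝ)) + d
        = (⌊(M:ℝ)/(4*(q:ℝ))⌋ : ℝ) + ((e:ℝ) + D)/(4*(q:ℝ)) := by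
      have hfl := Int.floor_add_fract ((M:ℝ)/(4*(q:ℝ)))
      rw [hfr] at hfl
      have : ((e:ℝ) + D)/(4*(q:ℝ)) = (e:ℝ)/(4*(q:ℝ)) + d := by
        rw [hD]; field_simp
      rw [this]; linarith
    rw [hsplit, Int.fract_intCast_add]
    refine Int.fract_eq_self.2 ⟨?_, ?_⟩
    · apply div_nonneg _ (by positivity)
      linarith
    · rw [div_lt_one (by positivity)]
      linarith
  rw [hEq, div_lt_iff₀ (by positivity : (0:ℝ) < 4*(q:ℝ))]
  constructor
  · intro h
    by_contra hc2
    push_neg at hc2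
    have h5 : 2*(q:ℤ) + 1 ≤ e := by omega
    have hR : 2*(q:ℝ) + 1 ≤ (e:ℝ) := by exact_mod_cast h5
    linarith
  · intro h
    have h5 : e ≤ 2*(q:ℤ) - 1 := by omega
    have hR : (e:ℝ) ≤ 2*(q:ℝ) - 1 := by
      have : (e:ℝ) ≤ ((2*(q:ℤ) - 1 : ℤ):ℝ) := by exact_mod_cast h5
      push_cast at this; linarith
    linarith

lemma same_val (r q N : ℕ) (hq : Odd q) (hq0 : 0 < q) (α : ℝ)
    (hδ : |(q:ℝ)*α - round ((q:ℝ)*α)| * (N:ℝ)^r < 1/4)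
    (a b : ℤ) (ha : |a| ≤ (N:ℤ)) (hb : |b| ≤ (N:ℤ)) (hdvd : (q:ℤ) ∣ b - a) :
    (if Int.fract (α * (a:ℝ)^r + 1/4) < 1/2 then (1:ℕ) else 0) =
    (if Int.fract (α * (b:ℝ)^r + 1/4) < 1/2 then (1:ℕ) else 0) := by
  set p : ℤ := round ((q:ℝ)*α) with hp
  have hmod : (4*(p*a^r) + (q:ℤ)) % ((4*q:ℕ):ℤ) = (4*(p*b^r) + (q:ℤ)) % ((4*q:ℕ):ℤ) := by
    have h1 : (q:ℤ) ∣ b^r - a^r := hdvd.trans (sub_dvd_pow_sub_pow b a r)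
    obtain ⟨t, ht⟩ := h1
    have h2 : ((4*q:ℕ):ℤ) ∣ (4*(p*b^r) + (q:ℤ)) - (4*(p*a^r) + (q:ℤ)) := by
      refine ⟨p*t, ?_⟩
      push_cast
      linear_combination (4*(p:ℤ)) * ht
    exact (Int.modEq_iff_dvd.mpr h2 : _)
  have h1 := indicator_mod r q hq hq0 α N hδ a ha
  have h2 := indicator_mod r q hq hq0 α N hδ b hb
  rw [hp] at hmod
  by_cases hcase : Int.fract (α * (a:ℝ)^r + 1/4) < 1/2
  · rw [if_pos hcase, if_pos (h2.mpr (hmod ▸ h1.mp hcase))]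
  · rw [if_neg hcase, if_neg (fun hb2 => hcase (h1.mpr (hmod ▸ h2.mp hb2)))]


/-- If `⟨qα⟩ < q^{-r-ε}` for infinitely many odd positive integers `q`, then the
coding `s_n = χ_{[0,1/2)}(αn^r + 1/4)` has infinite pinned repetitions:
`R(s) = T(s) = ∞`. -/
theorem infinite_repetitions_polynomial (r : ℕ) (hr : 0 < r) (ε : ℝ) (hε : 0 < ε)
    (α : ℝ)
    (hα : {q : ℕ | Odd q ∧ 0 < q ∧
      distInt ((q : ℝ) * α) < (q : ℝ) ^ (-(r : ℝ) - ε)}.Infinite) :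
    RRep (fun n : ℤ => if Int.fract (α * (n : ℝ) ^ r + 1 / 4) < 1 / 2 then (1 : ℕ) else 0) = ⊤ ∧
    TRep (fun n : ℤ => if Int.fract (α * (n : ℝ) ^ r + 1 / 4) < 1 / 2 then (1 : ℕ) else 0) = ⊤ := by
  set s : ℤ → ℕ :=
    fun n : ℤ => if Int.fract (α * (n : ℝ) ^ r + 1 / 4) < 1 / 2 then (1 : ℕ) else 0 with hs
  -- main frequency claim
  have key : ∀ m : ℕ, ∃ᶠ q in atTop, (m : ℝ≥0∞) ≤ Rn s q ∧ (m : ℝ≥0∞) ≤ Tn s q := by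
    intro m
    -- the bad set where q^{-ε} is not small enough is finite
    have htend : Tendsto (fun q : ℕ => ((m+1:ℕ):ℝ)^r * (q:ℝ)^(-ε)) atTop (nhds 0) := by
      have h1 : Tendsto (fun x : ℝ => x ^ (-ε)) atTop (nhds 0) := tendsto_rpow_neg_atTop hε
      have h2 := h1.comp tendsto_natCast_atTop_atTop (α := ℕ)
      simpa using h2.const_mul (((m+1:ℕ):ℝ)^r)
    have hev : ∀ᶠ q : ℕ in atTop, ((m+1:ℕ):ℝ)^r * (q:ℝ)^(-ε) < 1/4 := by
      have := htend.eventually (eventually_lt_nhds (by norm_num : (0:ℝ) < 1/4))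
      simpa using this
    obtain ⟨Q0, hQ0⟩ := eventually_atTop.mp hev
    -- good q's form an infinite set
    have hinf : ({q : ℕ | Odd q ∧ 0 < q ∧
        distInt ((q : ℝ) * α) < (q : ℝ) ^ (-(r : ℝ) - ε)} \ Set.Iio Q0).Infinite :=
      hα.diff (Set.finite_Iio Q0)
    rw [frequently_atTop]
    intro a
    obtain ⟨q, hqmem, hqa⟩ := hinf.exists_gt a
    obtain ⟨⟨hqodd, hq0, hqdist⟩, hqQ0⟩ := hqmem
    simp only [Set.mem_Iio, not_lt] at hqQ0
    refine ⟨q, le_of_lt hqa, ?_⟩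
    -- establish the smallness hypothesis with N = (m+1)*q
    set N : ℕ := (m+1)*q with hN
    have hQpos : (0:ℝ) < (q:ℝ) := by exact_mod_cast hq0
    have hδ : |(q:ℝ)*α - round ((q:ℝ)*α)| * (N:ℝ)^r < 1/4 := by
      have hd0 : 0 ≤ distInt ((q:ℝ)*α) := abs_nonneg _
      have hNr : (N:ℝ)^r = ((m+1:ℕ):ℝ)^r * (q:ℝ)^r := by
        rw [hN]; push_cast; rw [mul_pow]
      have hNpos : (0:ℝ) < (N:ℝ) := by
        exact_mod_cast Nat.mul_pos (Nat.succ_pos m) hq0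
      have h1 : distInt ((q:ℝ)*α) * (N:ℝ)^r
          < (q:ℝ) ^ (-(r:ℝ) - ε) * (((m+1:ℕ):ℝ)^r * (q:ℝ)^r) := by
        apply mul_lt_mul_of_pos_right hqdist (by exact pow_pos hNpos r) |>.trans_eq
        rw [hNr]
      have h2 : (q:ℝ) ^ (-(r:ℝ) - ε) * (((m+1:ℕ):ℝ)^r * (q:ℝ)^r)
          = ((m+1:ℕ):ℝ)^r * (q:ℝ)^(-ε) := by
        rw [show -(r:ℝ) - ε = -ε + (-(r:ℝ)) by ring, Real.rpow_add hQpos,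
          Real.rpow_neg hQpos.le (r:ℝ), Real.rpow_natCast]
        field_simp
      calc |(q:ℝ)*α - round ((q:ℝ)*α)| * (N:ℝ)^r
          = distInt ((q:ℝ)*α) * (N:ℝ)^r := rfl
        _ < ((m+1:ℕ):ℝ)^r * (q:ℝ)^(-ε) := by rw [← h2]; exact h1
        _ < 1/4 := hQ0 q hqQ0
    -- membership of m*q in both sets
    have habsb : ∀ k : ℕ, 1 ≤ k → k ≤ m*q →
        (s (k : ℤ) = s ((k : ℤ) + q) ∧ s ((q : ℤ) + 1 - k) = s (1 - (k : ℤ))) := by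
      intro k hk1 hk2
      have hkZ : (1:ℤ) ≤ (k:ℤ) := by exact_mod_cast hk1
      have hkZ2 : (k:ℤ) ≤ (m:ℤ)*(q:ℤ) := by exact_mod_cast hk2
      have hqZ : (1:ℤ) ≤ (q:ℤ) := by exact_mod_cast hq0
      have hNZ : (N:ℤ) = (m:ℤ)*(q:ℤ) + q := by rw [hN]; push_cast; ring
      constructor
      · exact same_val r q N hqodd hq0 α hδ (k:ℤ) ((k:ℤ)+q)
          (by rw [abs_le]; omega) (by rw [abs_le]; omega) ⟨1, by ring⟩
      · exact (same_val r q N hqodd hq0 α hδ (1-(k:ℤ)) ((q:ℤ)+1-k)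
          (by rw [abs_le]; omega) (by rw [abs_le]; omega) ⟨1, by ring⟩).symm
    -- conclude the bounds
    have hq0' : ((q:ℝ≥0∞)) ≠ 0 := by exact_mod_cast hq0.ne'
    have hqtop : ((q:ℝ≥0∞)) ≠ ⊤ := ENNReal.natCast_ne_top q
    have hm : (m : ℝ≥0∞) = (q:ℝ≥0∞)⁻¹ * ((m*q : ℕ) : ℝ≥0∞) := by
      push_cast
      rw [mul_comm (m:ℝ≥0∞), ← mul_assoc, ENNReal.inv_mul_cancel hq0' hqtop, one_mul]
    constructor
    · have hmem : ((m*q : ℕ) : ℝ≥0∞) ∈ ((fun m : ℕ => (m : ℝ≥0∞)) ''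
          {m' : ℕ | ∀ k : ℕ, 1 ≤ k → k ≤ m' → s (k : ℤ) = s ((k : ℤ) + q)}) :=
        ⟨m*q, fun k hk1 hk2 => (habsb k hk1 hk2).1, rfl⟩
      calc (m : ℝ≥0∞) = (q:ℝ≥0∞)⁻¹ * ((m*q : ℕ) : ℝ≥0∞) := hm
        _ ≤ (q:ℝ≥0∞)⁻¹ * sSup _ := mul_le_mul_right (le_sSup hmem) _
        _ ≤ Rn s q := le_add_self
    · have hmem : ((m*q : ℕ) : ℝ≥0∞) ∈ ((fun m : ℕ => (m : ℝ≥0∞)) ''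
          {m' : ℕ | ∀ k : ℕ, 1 ≤ k → k ≤ m' →
            s (k : ℤ) = s ((k : ℤ) + q) ∧ s ((q:ℤ) + 1 - k) = s (1 - (k : ℤ))}) :=
        ⟨m*q, fun k hk1 hk2 => habsb k hk1 hk2, rfl⟩
      calc (m : ℝ≥0∞) = (q:ℝ≥0∞)⁻¹ * ((m*q : ℕ) : ℝ≥0∞) := hm
        _ ≤ (q:ℝ≥0∞)⁻¹ * sSup _ := mul_le_mul_right (le_sSup hmem) _
        _ ≤ Tn s q := le_add_self
  constructor
  · refine eq_top_iff.2 ?_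
    rw [← ENNReal.iSup_natCast]
    exact iSup_le fun m => le_limsup_of_frequently_le' ((key m).mono fun q h => h.1)
  · refine eq_top_iff.2 ?_
    rw [← ENNReal.iSup_natCast]
    exact iSup_le fun m => le_limsup_of_frequently_le' ((key m).mono fun q h => h.2)
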